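/- Let 0 < a < 1/6 and define s₋(a) = (1 − 2a − 2a² − √((2a+1)(1−6a)))/2. Then s₋(a) > 3a². -/
import Mathlib

theorem stmt_14 (a : ℝ) (ha : 0 < a) (ha' : a < 1 / 6) :
    3 * a ^ 2 <
      (1 - 2 * a - 2 * a ^ 2 - Real.sqrt ((2 * a + 1) * (1 - 6 * a))) / 2 := by
  have hy : (0:ℝ) < 1 - 2 * a - 8 * a ^ 2 := by nlinarith
  have hs : Real.sqrt ((2 * a + 1) * (1 - 6 * a)) < 1 - 2 * a - 8 * a ^ 2 := by
    rw [show (1 - 2 * a - 8 * a ^ 2) = Real.sqrt ((1 - 2 * a - 8 * a ^ 2) ^ 2) by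
      rw [Real.sqrt_sq hy.le]]
    apply Real.sqrt_lt_sqrt (by nlinarith)
    nlinarith [pow_pos ha 3, pow_pos ha 4]
  linarith
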